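/- Let π be a uniformly random permutation of [n]. Then the minimum degree of the permutation graph G_π satisfies δ(G_π)/n → 0 in probability and the maximum degree satisfies Δ(G_π)/n → 1 in probability as n → ∞. -/

import Mathlib

open Filter

/-- Degree of vertex `i` in the permutation graph of `π`. -/
noncomputable def deg (n : ℕ) (π : Equiv.Perm (Fin n)) (i : Fin n) : ℕ :=
  Nat.card {j : Fin n // (j < i ∧ π i < π j) ∨ (i < j ∧ π j < π i)}

open Finset

lemma deg_eq (n : ℕ) (π : Equiv.Perm (Fin n)) (i : Fin n) :
    deg n π i = (univ.filter fun j : Fin n =>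
      (j < i ∧ π i < π j) ∨ (i < j ∧ π j < π i)).card := by
  rw [deg, Nat.card_eq_fintype_card, Fintype.card_subtype]

lemma card_filter_lt (n : ℕ) (i : Fin n) :
    (univ.filter fun j : Fin n => j < i).card = (i : ℕ) := by
  have : (univ.filter fun j : Fin n => j < i) = Finset.Iio i := by ext j; simp
  rw [this, Fin.card_Iio]

lemma card_filter_perm_lt (n : ℕ) (π : Equiv.Perm (Fin n)) (i : Fin n) :
    (univ.filter fun j : Fin n => π j < π i).card = ((π i : ℕ)) := by
  have h : (univ.filter fun j : Fin n => π j < π i)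
      = (univ.filter fun m : Fin n => m < π i).image π.symm := by
    ext j
    simp only [Finset.mem_image, Finset.mem_filter, Finset.mem_univ, true_and]
    constructor
    · intro hj; exact ⟨π j, hj, by simp⟩
    · rintro ⟨m, hm, rfl⟩; simpa using hm
  rw [h, Finset.card_image_of_injective _ π.symm.injective, card_filter_lt]

lemma deg_le (n : ℕ) (π : Equiv.Perm (Fin n)) (i : Fin n) :
    deg n π i ≤ (i : ℕ) + (π i : ℕ) := by
  rw [deg_eq]
  calc (univ.filter fun j : Fin n =>
      (j < i ∧ π i < π j) ∨ (i < j ∧ π j < π i)).card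
      ≤ ((univ.filter fun j : Fin n => j < i) ∪ (univ.filter fun j : Fin n => π j < π i)).card := by
        apply Finset.card_le_card
        intro j hj
        simp only [Finset.mem_filter, Finset.mem_union, Finset.mem_univ, true_and] at *
        tauto
    _ ≤ (univ.filter fun j : Fin n => j < i).card + (univ.filter fun j : Fin n => π j < π i).card :=
        Finset.card_union_le _ _
    _ = (i : ℕ) + (π i : ℕ) := by rw [card_filter_lt, card_filter_perm_lt]

lemma le_deg (n : ℕ) (π : Equiv.Perm (Fin n)) (i : Fin n) :
    (π i : ℕ) - (i : ℕ) ≤ deg n π i := by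
  rw [deg_eq]
  have h1 : (univ.filter fun j : Fin n => π j < π i)
      ⊆ (univ.filter fun j : Fin n => i < j ∧ π j < π i) ∪ (univ.filter fun j : Fin n => j < i) := by
    intro j hj
    simp only [Finset.mem_filter, Finset.mem_union, Finset.mem_univ, true_and] at *
    rcases lt_trichotomy i j with h | h | h
    · exact Or.inl ⟨h, hj⟩
    · subst h; exact absurd hj (lt_irrefl _)
    · exact Or.inr h
  have h2 := Finset.card_le_card h1
  have h3 := Finset.card_union_le (univ.filter fun j : Fin n => i < j ∧ π j < π i)
    (univ.filter fun j : Fin n => j < i)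
  have h4 : (univ.filter fun j : Fin n => i < j ∧ π j < π i).card
      ≤ (univ.filter fun j : Fin n =>
        (j < i ∧ π i < π j) ∨ (i < j ∧ π j < π i)).card := by
    apply Finset.card_le_card
    intro j hj
    simp only [Finset.mem_filter, Finset.mem_univ, true_and] at *
    tauto
  rw [card_filter_perm_lt] at h2
  rw [card_filter_lt] at h3
  omega

lemma deg_le_n (n : ℕ) (π : Equiv.Perm (Fin n)) (i : Fin n) : deg n π i ≤ n := by
  rw [deg_eq]
  calc _ ≤ (univ : Finset (Fin n)).card := Finset.card_filter_le _ _
    _ = n := by simp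

lemma card_mono_subtype {α : Type*} [Finite α] {p q : α → Prop} (h : ∀ a, p a → q a) :
    Nat.card {a // p a} ≤ Nat.card {a // q a} :=
  Nat.card_le_card_of_injective (fun x => ⟨x.1, h x.1 x.2⟩)
    (fun x y hxy => Subtype.ext (by simpa using congrArg Subtype.val hxy))

lemma bad_count (n : ℕ) (A B : Finset (Fin n)) :
    Nat.card {π : Equiv.Perm (Fin n) // ∀ a ∈ A, π a ∉ B} * (A.card * B.card)
      ≤ n.factorial * n := by
  classical
  set T := {π : Equiv.Perm (Fin n) // ∀ a ∈ A, π a ∉ B}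
  let Φ : T × (A × B) → Equiv.Perm (Fin n) × Fin n :=
    fun x => (x.1.1 * Equiv.swap x.2.1.1 (x.1.1⁻¹ x.2.2.1), x.1.1 x.2.1.1)
  have key : ∀ (π : T) (a : A) (b : B),
      ((π : Equiv.Perm (Fin n))⁻¹ (b : Fin n)) ∉ A := by
    rintro ⟨π, hπ⟩ ⟨a, ha⟩ ⟨b, hb⟩ hc
    exact hπ _ hc (by simpa using hb)
  have hswap : ∀ (π : T) (a : A) (b : B),
      ((π : Equiv.Perm (Fin n)) * Equiv.swap (a : Fin n) ((π : Equiv.Perm (Fin n))⁻¹ (b:Fin n)))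
        (a : Fin n) = (b : Fin n) := by
    rintro π a b
    simp [Equiv.Perm.mul_apply, Equiv.swap_apply_left]
  have hother : ∀ (π : T) (a : A) (b : B) (j : Fin n), j ∈ A → j ≠ (a : Fin n) →
      ((π : Equiv.Perm (Fin n)) * Equiv.swap (a:Fin n) ((π : Equiv.Perm (Fin n))⁻¹ (b:Fin n))) j
        = (π : Equiv.Perm (Fin n)) j := by
    rintro π a b j hj hja
    have hjc : j ≠ (π : Equiv.Perm (Fin n))⁻¹ (b:Fin n) := by
      intro h; exact key π a b (h ▸ hj)
    simp [Equiv.Perm.mul_apply, Equiv.swap_apply_of_ne_of_ne hja hjc]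
    exact Equiv.swap_apply_of_ne_of_ne hja hjc
  have hinj : Function.Injective Φ := by
    rintro ⟨⟨π₁, h₁⟩, ⟨a₁, ha₁⟩, ⟨b₁, hb₁⟩⟩ ⟨⟨π₂, h₂⟩, ⟨a₂, ha₂⟩, ⟨b₂, hb₂⟩⟩ heq
    simp only [Φ, Prod.mk.injEq] at heq
    obtain ⟨hσ, hv⟩ := heq
    set c₁ := π₁⁻¹ b₁ with hc₁
    set c₂ := π₂⁻¹ b₂ with hc₂
    have ha : a₁ = a₂ := by
      by_contra hne
      have e1 : (π₁ * Equiv.swap a₁ c₁) a₂ = π₁ a₂ :=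
        hother ⟨π₁, h₁⟩ ⟨a₁, ha₁⟩ ⟨b₁, hb₁⟩ a₂ ha₂ (fun h => hne h.symm)
      have e2 : (π₂ * Equiv.swap a₂ c₂) a₂ = b₂ := hswap ⟨π₂, h₂⟩ ⟨a₂, ha₂⟩ ⟨b₂, hb₂⟩
      rw [hσ, e2] at e1
      exact h₁ a₂ ha₂ (e1 ▸ hb₂)
    subst ha
    have hb : b₁ = b₂ := by
      have e1 : (π₁ * Equiv.swap a₁ c₁) a₁ = b₁ := hswap ⟨π₁, h₁⟩ ⟨a₁, ha₁⟩ ⟨b₁, hb₁⟩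
      have e2 : (π₂ * Equiv.swap a₁ c₂) a₁ = b₂ := hswap ⟨π₂, h₂⟩ ⟨a₁, ha₂⟩ ⟨b₂, hb₂⟩
      rw [hσ, e2] at e1
      exact e1.symm
    have hcc : c₁ = c₂ := by
      have e1 : (π₁ * Equiv.swap a₁ c₁) c₁ = π₁ a₁ := by
        simp [Equiv.Perm.mul_apply, Equiv.swap_apply_right]
      have e2 : (π₂ * Equiv.swap a₁ c₂) c₂ = π₂ a₁ := by
        simp [Equiv.Perm.mul_apply, Equiv.swap_apply_right]
      have : (π₁ * Equiv.swap a₁ c₁) c₁ = (π₁ * Equiv.swap a₁ c₁) c₂ := by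
        rw [e1, hv, hσ, e2]
      exact (π₁ * Equiv.swap a₁ c₁).injective this
    have hππ : π₁ = π₂ := by
      have h5 : (π₁ * Equiv.swap a₁ c₁) * Equiv.swap a₁ c₁ = (π₂ * Equiv.swap a₁ c₂) * Equiv.swap a₁ c₂ := by
        rw [hσ, hcc]
      simpa [mul_assoc, Equiv.swap_mul_self] using h5
    subst hb hππ
    rfl
  have hcard := Nat.card_le_card_of_injective Φ hinj
  have h1 : Nat.card (T × (A × B)) = Nat.card T * (A.card * B.card) := by
    rw [Nat.card_prod, Nat.card_prod]
    congr 2 <;> simp [Nat.card_eq_fintype_card]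
  have h2 : Nat.card (Equiv.Perm (Fin n) × Fin n) = n.factorial * n := by
    rw [Nat.card_prod, Nat.card_eq_fintype_card, Nat.card_eq_fintype_card]
    simp [Fintype.card_perm]
  rw [h1, h2] at hcard
  exact hcard

lemma cardA (n k : ℕ) (h : k ≤ n) :
    (univ.filter fun i : Fin n => (i : ℕ) < k).card = k := by
  have himg : (univ.filter fun i : Fin n => (i : ℕ) < k).image Fin.val = Finset.range k := by
    ext m
    simp only [Finset.mem_image, Finset.mem_filter, Finset.mem_univ, true_and, Finset.mem_range]
    constructor
    · rintro ⟨i, hi, rfl⟩; exact hi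
    · intro hm; exact ⟨⟨m, lt_of_lt_of_le hm h⟩, hm, rfl⟩
  rw [← Finset.card_image_of_injective _ Fin.val_injective, himg, Finset.card_range]

lemma cardB (n k : ℕ) (h : k ≤ n) :
    (univ.filter fun i : Fin n => n - k ≤ (i : ℕ)).card = k := by
  have himg : (univ.filter fun i : Fin n => n - k ≤ (i : ℕ)).image Fin.val
      = Finset.Ico (n - k) n := by
    ext m
    simp only [Finset.mem_image, Finset.mem_filter, Finset.mem_univ, true_and, Finset.mem_Ico]
    constructor
    · rintro ⟨i, hi, rfl⟩; exact ⟨hi, i.isLt⟩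
    · rintro ⟨h1, h2⟩; exact ⟨⟨m, h2⟩, h1, rfl⟩
  rw [← Finset.card_image_of_injective _ Fin.val_injective, himg, Nat.card_Ico]
  omega

lemma ratio_bound (ε : ℝ) (hε : 0 < ε) (n k cE : ℕ) (hn : 1 ≤ n)
    (hk : ε * n / 4 ≤ (k : ℝ)) (h : cE * (k * k) ≤ n.factorial * n) :
    (cE : ℝ) / (n.factorial : ℝ) ≤ (16 / ε ^ 2) / n := by
  have hnR : (1:ℝ) ≤ n := by exact_mod_cast hn
  have hn0 : (0:ℝ) < n := by linarith
  have hF : (0:ℝ) < (n.factorial : ℝ) := by exact_mod_cast n.factorial_pos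
  have hcast : (cE : ℝ) * ((k:ℝ) * k) ≤ (n.factorial : ℝ) * n := by exact_mod_cast h
  have hx : (0:ℝ) ≤ ε * n / 4 := by positivity
  have hkk : (ε * n / 4) ^ 2 ≤ (k:ℝ) * k := by nlinarith
  have key : (cE : ℝ) * (ε * n / 4) ^ 2 ≤ (n.factorial : ℝ) * n := by
    have := mul_le_mul_of_nonneg_left hkk (by positivity : (0:ℝ) ≤ (cE:ℝ))
    linarith
  have h6 : (cE:ℝ) * n * ε ^ 2 * n ≤ 16 * (n.factorial : ℝ) * n := by nlinarith
  have h7 : (cE:ℝ) * n * ε ^ 2 ≤ 16 * (n.factorial : ℝ) := le_of_mul_le_mul_right h6 hn0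
  rw [div_le_div_iff₀ hF hn0, div_mul_eq_mul_div, le_div_iff₀ (by positivity : (0:ℝ) < ε ^ 2)]
  nlinarith

lemma part1 (ε : ℝ) (hε : 0 < ε) (hε1 : ε < 1) :
    Tendsto
      (fun n : ℕ =>
        (Nat.card {π : Equiv.Perm (Fin n) //
            ∀ i : Fin n, ε * (n : ℝ) < (deg n π i : ℝ)} : ℝ) / (Nat.factorial n : ℝ))
      atTop (nhds 0) := by
  apply tendsto_of_tendsto_of_tendsto_of_le_of_le' tendsto_const_nhds
    (tendsto_const_div_atTop_nhds_zero_nat (16 / ε ^ 2))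
  · filter_upwards with n; positivity
  · filter_upwards [eventually_ge_atTop 1] with n hn
    set k := ⌈ε * n / 4⌉₊ with hkdef
    have hnR : (1:ℝ) ≤ n := by exact_mod_cast hn
    have hx0 : (0:ℝ) ≤ ε * n / 4 := by positivity
    have hkge : ε * n / 4 ≤ (k : ℝ) := Nat.le_ceil _
    have hklt : (k : ℝ) < ε * n / 4 + 1 := Nat.ceil_lt_add_one hx0
    have hknR : (k : ℝ) < (n:ℝ) + 1 := by nlinarith
    have hkn : k ≤ n := by
      have : k < n + 1 := by exact_mod_cast hknR
      omega
    set A := univ.filter fun i : Fin n => (i : ℕ) < k with hA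
    have himp : ∀ π : Equiv.Perm (Fin n),
        (∀ i : Fin n, ε * (n : ℝ) < (deg n π i : ℝ)) → (∀ a ∈ A, π a ∉ A) := by
      intro π hπ a ha hb
      simp only [hA, Finset.mem_filter, Finset.mem_univ, true_and] at ha hb
      have hd := deg_le n π a
      have hda : (deg n π a : ℝ) ≤ ((a : ℕ) : ℝ) + (((π a : ℕ)) : ℝ) := by exact_mod_cast hd
      have h1 : ((a : ℕ) : ℝ) ≤ (k : ℝ) - 1 := by
        have h' : ((a:ℕ) : ℝ) + 1 ≤ (k:ℝ) := by exact_mod_cast ha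
        linarith
      have h2 : (((π a : ℕ)) : ℝ) ≤ (k : ℝ) - 1 := by
        have h' : (((π a:ℕ)) : ℝ) + 1 ≤ (k:ℝ) := by exact_mod_cast hb
        linarith
      have h3 := hπ a
      nlinarith
    have hle := card_mono_subtype himp
    have hbad := bad_count n A A
    have hAc : A.card = k := cardA n k hkn
    rw [hAc] at hbad
    have hcomb : Nat.card {π : Equiv.Perm (Fin n) //
        ∀ i : Fin n, ε * (n : ℝ) < (deg n π i : ℝ)} * (k * k) ≤ n.factorial * n :=
      le_trans (Nat.mul_le_mul_right _ hle) hbad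
    exact ratio_bound ε hε n k _ hn hkge hcomb

lemma part2 (ε : ℝ) (hε : 0 < ε) (hε1 : ε < 1) :
    Tendsto
      (fun n : ℕ =>
        (Nat.card {π : Equiv.Perm (Fin n) //
            ε < |((Finset.univ.sup (fun i : Fin n => deg n π i) : ℕ) : ℝ) / (n : ℝ) - 1|} : ℝ) /
          (Nat.factorial n : ℝ))
      atTop (nhds 0) := by
  apply tendsto_of_tendsto_of_tendsto_of_le_of_le' tendsto_const_nhds
    (tendsto_const_div_atTop_nhds_zero_nat (16 / ε ^ 2))
  · filter_upwards with n; positivity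
  · filter_upwards [eventually_ge_atTop 4,
      (tendsto_natCast_atTop_atTop (R := ℝ)).eventually_ge_atTop (2 / ε)] with n hn4 hn2
    have hn : 1 ≤ n := by omega
    have hnR : (4:ℝ) ≤ n := by exact_mod_cast hn4
    have hn0 : (0:ℝ) < n := by linarith
    have h2εn : 2 ≤ ε * n := by
      have := (div_le_iff₀ hε).mp hn2
      linarith
    set k := ⌈ε * n / 4⌉₊ with hkdef
    have hx0 : (0:ℝ) ≤ ε * n / 4 := by positivity
    have hkge : ε * n / 4 ≤ (k : ℝ) := Nat.le_ceil _
    have hklt : (k : ℝ) < ε * n / 4 + 1 := Nat.ceil_lt_add_one hx0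
    have h2kR : (2 * k : ℝ) < (n : ℝ) := by nlinarith
    have h2k : 2 * k ≤ n := by
      have : 2 * k < n := by exact_mod_cast h2kR
      omega
    have hkn : k ≤ n := by omega
    set A := univ.filter fun i : Fin n => (i : ℕ) < k with hA
    set B := univ.filter fun i : Fin n => n - k ≤ (i : ℕ) with hB
    have himp : ∀ π : Equiv.Perm (Fin n),
        (ε < |((Finset.univ.sup (fun i : Fin n => deg n π i) : ℕ) : ℝ) / (n : ℝ) - 1|)
          → (∀ a ∈ A, π a ∉ B) := by
      intro π hπ a ha hb
      simp only [hA, hB, Finset.mem_filter, Finset.mem_univ, true_and] at ha hb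
      set Δ := Finset.univ.sup (fun i : Fin n => deg n π i) with hΔ
      have hΔn : Δ ≤ n := Finset.sup_le fun i _ => deg_le_n n π i
      have hΔa : deg n π a ≤ Δ := Finset.le_sup (Finset.mem_univ a)
      have hd := le_deg n π a
      have hΔlow : n + 1 ≤ Δ + 2 * k := by omega
      have hΔnR : (Δ : ℝ) ≤ n := by exact_mod_cast hΔn
      have hΔlowR : (n : ℝ) + 1 ≤ (Δ : ℝ) + 2 * k := by exact_mod_cast hΔlow
      have habs : |(Δ : ℝ) / n - 1| = 1 - (Δ:ℝ) / n := by
        rw [abs_of_nonpos (by rw [sub_nonpos]; exact (div_le_one hn0).mpr hΔnR)]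
        ring
      rw [habs] at hπ
      have h9 : (Δ : ℝ) < n * (1 - ε) := by
        rw [← div_lt_iff₀' hn0]  -- maybe wrong form
        linarith
      nlinarith
    have hle := card_mono_subtype himp
    have hbad := bad_count n A B
    have hAc : A.card = k := cardA n k hkn
    have hBc : B.card = k := cardB n k hkn
    rw [hAc, hBc] at hbad
    have hcomb : Nat.card {π : Equiv.Perm (Fin n) //
        ε < |((Finset.univ.sup (fun i : Fin n => deg n π i) : ℕ) : ℝ) / (n : ℝ) - 1|} * (k * k)
          ≤ n.factorial * n :=
      le_trans (Nat.mul_le_mul_right _ hle) hbad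
    exact ratio_bound ε hε n k _ hn hkge hcomb


/-- for a uniformly random permutation, `δ(G_π)/n → 0` and
`Δ(G_π)/n → 1` in probability: for every `ε > 0`,
`P(δ(G_π)/n > ε) → 0` and `P(|Δ(G_π)/n - 1| > ε) → 0`. -/
theorem min_max_degree_in_probability (ε : ℝ) (hε : 0 < ε) :
    Tendsto
      (fun n : ℕ =>
        (Nat.card {π : Equiv.Perm (Fin n) //
            ∀ i : Fin n, ε * (n : ℝ) < (deg n π i : ℝ)} : ℝ) / (Nat.factorial n : ℝ))
      atTop (nhds 0) ∧
    Tendsto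
      (fun n : ℕ =>
        (Nat.card {π : Equiv.Perm (Fin n) //
            ε < |((Finset.univ.sup (fun i : Fin n => deg n π i) : ℕ) : ℝ) / (n : ℝ) - 1|} : ℝ) /
          (Nat.factorial n : ℝ))
      atTop (nhds 0) := by
  set ε' := min ε (1/2) with hε'def
  have hε' : 0 < ε' := lt_min hε (by norm_num)
  have hε'1 : ε' < 1 := lt_of_le_of_lt (min_le_right _ _) (by norm_num)
  have hε'le : ε' ≤ ε := min_le_left _ _
  constructor
  · apply tendsto_of_tendsto_of_tendsto_of_le_of_le' tendsto_const_nhds (part1 ε' hε' hε'1)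
    · filter_upwards with n; positivity
    · filter_upwards with n
      gcongr
      have : Nat.card {π : Equiv.Perm (Fin n) //
          ∀ i : Fin n, ε * (n : ℝ) < (deg n π i : ℝ)}
          ≤ Nat.card {π : Equiv.Perm (Fin n) //
          ∀ i : Fin n, ε' * (n : ℝ) < (deg n π i : ℝ)} :=
        card_mono_subtype (fun π h i =>
          lt_of_le_of_lt (mul_le_mul_of_nonneg_right hε'le (Nat.cast_nonneg n)) (h i))
      exact_mod_cast this
  · apply tendsto_of_tendsto_of_tendsto_of_le_of_le' tendsto_const_nhds (part2 ε' hε' hε'1)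
    · filter_upwards with n; positivity
    · filter_upwards with n
      gcongr
      have : Nat.card {π : Equiv.Perm (Fin n) //
          ε < |((Finset.univ.sup (fun i : Fin n => deg n π i) : ℕ) : ℝ) / (n : ℝ) - 1|}
          ≤ Nat.card {π : Equiv.Perm (Fin n) //
          ε' < |((Finset.univ.sup (fun i : Fin n => deg n π i) : ℕ) : ℝ) / (n : ℝ) - 1|} :=
        card_mono_subtype (fun π h => lt_of_le_of_lt hε'le h)
      exact_mod_cast this
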